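/- (Birman–Schwinger principle.) Let m ≥ 0 and let V ∈ ℓ^∞(ℤ, ℂ^{2×2}) be a bounded potential. Then for every λ ∉ σ(D₀): λ ∈ σ(D_V) if and only if −1 ∈ σ(K(λ)). -/

import Mathlib

open scoped ComplexOrder
open Matrix

noncomputable section

abbrev Mat2 : Type := Matrix (Fin 2) (Fin 2) ℂ
abbrev Vec2 : Type := EuclideanSpace ℂ (Fin 2)
abbrev Hsp : Type := lp (fun _ : ℤ => Vec2) 2

/-- A `2×2` complex matrix acting on `ℂ²` as a continuous linear map. -/
def mAct (A : Mat2) : Vec2 →L[ℂ] Vec2 := Matrix.toEuclideanCLM (𝕜 := ℂ) A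

/-- The spectral (operator) norm of a `2×2` complex matrix. -/
def specNorm (A : Mat2) : ℝ := ‖mAct A‖

/-- The Hilbert–Schmidt (Frobenius) norm of a `2×2` complex matrix. -/
def hsNorm (A : Mat2) : ℝ := Real.sqrt (∑ i, ∑ j, ‖A i j‖ ^ 2)

def bMat (m : ℝ) : Mat2 := !![(-m : ℂ), 1; 1, (m : ℂ)]

def aMat : Mat2 := !![0, 0; -1, 0]

/-- `D0` is the free discrete Dirac operator with mass `m`. -/
def IsFreeDirac (m : ℝ) (D0 : Hsp →L[ℂ] Hsp) : Prop :=
  ∀ u : Hsp, ∀ n : ℤ,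
    (D0 u) n = mAct aMat.transpose (u (n - 1)) + mAct (bMat m) (u n) + mAct aMat (u (n + 1))

/-- `Vop` is the block-diagonal operator with blocks `υ n`. -/
def IsBlockDiagOp (υ : ℤ → Mat2) (Vop : Hsp →L[ℂ] Hsp) : Prop :=
  ∀ u : Hsp, ∀ n : ℤ, (Vop u) n = mAct (υ n) (u n)

/-- The spectrum `[−√(m²+4), −m] ∪ [m, √(m²+4)]` as a subset of `ℂ`. -/
def sigma0 (m : ℝ) : Set ℂ :=
  Complex.ofReal '' (Set.Icc (-Real.sqrt (m ^ 2 + 4)) (-m) ∪ Set.Icc m (Real.sqrt (m ^ 2 + 4)))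

def T0mat (m : ℝ) (lam k : ℂ) : Mat2 :=
  (k⁻¹ - k)⁻¹ • !![lam - m, 1 - k; 1 - k, lam + m]

def T1mat (m : ℝ) (lam k : ℂ) : Mat2 :=
  (k * (k⁻¹ - k)⁻¹) • !![lam - m, 1 - k; 1 - k⁻¹, lam + m]

def Tmat (m : ℝ) (lam k : ℂ) : ℤ → Mat2 := fun j =>
  if j = 0 then T0mat m lam k
  else if 0 < j then k ^ (j.toNat - 1) • T1mat m lam k
  else (k ^ ((-j).toNat - 1) • T1mat m lam k).transpose

/-- The old Mathlib `Matrix.PosSemidef.sqrt` (removed since), spelled out for `2×2` matrices. -/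
def psdSqrtOld {A : Mat2} (hA : A.IsHermitian) : Mat2 :=
  (hA.eigenvectorUnitary : Mat2) * Matrix.diagonal ((↑) ∘ Real.sqrt ∘ hA.eigenvalues) *
    (star hA.eigenvectorUnitary : Mat2)

theorem psdSqrtOld_isHermitian {A : Mat2} (hA : A.IsHermitian) : (psdSqrtOld hA).IsHermitian := by
  have h : star (Complex.ofReal ∘ Real.sqrt ∘ hA.eigenvalues) = Complex.ofReal ∘ Real.sqrt ∘ hA.eigenvalues := by
    funext i
    simp
  simp [psdSqrtOld, Matrix.IsHermitian, conjTranspose_mul, diagonal_conjTranspose, Matrix.mul_assoc, h,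
    star_eq_conjTranspose]

def wMat (υ : ℤ → Mat2) (n : ℤ) : Mat2 :=
  psdSqrtOld (Matrix.posSemidef_conjTranspose_mul_self (υ n)).1

def sqrtwMat (υ : ℤ → Mat2) (n : ℤ) : Mat2 :=
  psdSqrtOld (psdSqrtOld_isHermitian (Matrix.posSemidef_conjTranspose_mul_self (υ n)).1)

/-- The Birman–Schwinger operator `K(z) = √W (D₀ − z)⁻¹ U √W`. -/
def Kop (D0 sW Uop : Hsp →L[ℂ] Hsp) (z : ℂ) : Hsp →L[ℂ] Hsp :=
  sW * Ring.inverse (D0 - z • (1 : Hsp →L[ℂ] Hsp)) * Uop * sW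

/-- The element of `ℓ²(ℤ, ℂ²)` supported at site `j` equal to the `β`-th standard basis vector. -/
def deltaVec (j : ℤ) (β : Fin 2) : Hsp := lp.single 2 j (EuclideanSpace.single β (1 : ℂ))


theorem psdSqrtOld_mul_self {A : Mat2} (hA : A.IsHermitian) (h : ∀ i, 0 ≤ hA.eigenvalues i) :
    psdSqrtOld hA * psdSqrtOld hA = A := by
  conv_rhs => rw [hA.spectral_theorem]
  have hU : (star hA.eigenvectorUnitary : Mat2) * (hA.eigenvectorUnitary : Mat2) = 1 :=
    Unitary.coe_star_mul_self _
  simp only [psdSqrtOld]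
  rw [show ∀ P Q R : Mat2, P * Q * R * (P * Q * R) = P * (Q * (R * P) * Q) * R by
    intro P Q R; simp only [Matrix.mul_assoc], hU, Matrix.mul_one, diagonal_mul_diagonal]
  simp only [Unitary.conjStarAlgAut_apply]
  congr 3
  funext i
  simp [← Complex.ofReal_mul, Real.mul_self_sqrt (h i)]

theorem psdSqrtOld_posSemidef {A : Mat2} (hA : A.IsHermitian) : (psdSqrtOld hA).PosSemidef := by
  have hD : (diagonal ((↑) ∘ Real.sqrt ∘ hA.eigenvalues : Fin 2 → ℂ)).PosSemidef :=
    posSemidef_diagonal_iff.mpr (fun i => by simp [Real.sqrt_nonneg])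
  simpa [psdSqrtOld, star_eq_conjTranspose] using
    hD.mul_mul_conjTranspose_same (hA.eigenvectorUnitary : Mat2)

/-- Birman–Schwinger principle: for bounded `V` and `λ ∉ σ(D₀)`,
`λ ∈ σ(D_V) ↔ −1 ∈ σ(K(λ))`. -/
theorem stmt12 (m : ℝ) (hm : 0 ≤ m) (υ u : ℤ → Mat2)
    (hbdd : BddAbove (Set.range fun n => specNorm (υ n)))
    (hpolar : ∀ n, υ n = u n * wMat υ n) (hu : ∀ n, specNorm (u n) ≤ 1)
    (D0 Vop sW Uop : Hsp →L[ℂ] Hsp)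
    (hD0 : IsFreeDirac m D0) (hVop : IsBlockDiagOp υ Vop)
    (hsW : IsBlockDiagOp (sqrtwMat υ) sW) (hU : IsBlockDiagOp u Uop)
    (lam : ℂ) (hlam : lam ∉ spectrum ℂ D0) :
    lam ∈ spectrum ℂ (D0 + Vop) ↔ (-1 : ℂ) ∈ spectrum ℂ (Kop D0 sW Uop lam) := by
  -- V = U √W √W as operators
  have hVeq : Vop = Uop * (sW * sW) := by
    refine ContinuousLinearMap.ext fun x => lp.ext (funext fun n => ?_)
    have h1 : (Uop * (sW * sW)) x n
        = mAct (u n) (mAct (sqrtwMat υ n) (mAct (sqrtwMat υ n) (x n))) := by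
      rw [ContinuousLinearMap.mul_apply, ContinuousLinearMap.mul_apply, hU, hsW, hsW]
    have h2 : sqrtwMat υ n * sqrtwMat υ n = wMat υ n :=
      psdSqrtOld_mul_self _ (fun i => (psdSqrtOld_posSemidef _).eigenvalues_nonneg i)
    rw [hVop, h1, hpolar n, ← h2]
    simp only [mAct, _root_.map_mul, ContinuousLinearMap.mul_apply]
  set L : Hsp →L[ℂ] Hsp := D0 - lam • 1 with hLdef
  have hL : IsUnit L := by
    have := spectrum.notMem_iff.mp hlam
    have h : L = -(algebraMap ℂ (Hsp →L[ℂ] Hsp) lam - D0) := by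
      rw [Algebra.algebraMap_eq_smul_one, hLdef]; noncomm_ring
    rw [h]
    exact this.neg
  set R : Hsp →L[ℂ] Hsp := Ring.inverse L with hRdef
  have hLR : L * R = 1 := Ring.mul_inverse_cancel L hL
  have lhs_iff : lam ∈ spectrum ℂ (D0 + Vop) ↔ ¬ IsUnit (1 + R * Vop) := by
    rw [spectrum.mem_iff]
    have hfact : algebraMap ℂ (Hsp →L[ℂ] Hsp) lam - (D0 + Vop)
        = -(L * (1 + R * Vop)) := by
      have h1 : L * (1 + R * Vop) = L + Vop := by
        rw [mul_add, mul_one, ← mul_assoc, hLR, one_mul]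
      rw [h1, Algebra.algebraMap_eq_smul_one, hLdef]
      abel
    rw [hfact, IsUnit.neg_iff]
    constructor
    · intro h hrv
      exact h (hL.mul hrv)
    · intro h hprod
      refine h ?_
      have : (1 : Hsp →L[ℂ] Hsp) + R * Vop = (hL.unit⁻¹ : (Hsp →L[ℂ] Hsp)ˣ) * (L * (1 + R * Vop)) := by
        rw [← mul_assoc]
        have : ((hL.unit⁻¹ : (Hsp →L[ℂ] Hsp)ˣ) : Hsp →L[ℂ] Hsp) * L = 1 := by
          have := hL.unit.inv_mul
          rwa [hL.unit_spec] at this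
        rw [this, one_mul]
      rw [this]
      exact (Units.isUnit (hL.unit⁻¹)).mul hprod
  have rhs_iff : (-1 : ℂ) ∈ spectrum ℂ (Kop D0 sW Uop lam) ↔ (-1 : ℂ) ∈ spectrum ℂ (R * Vop) := by
    have hK : Kop D0 sW Uop lam = sW * (R * Uop * sW) := by
      rw [Kop, hRdef, hLdef]; noncomm_ring
    have hRV : R * Vop = (R * Uop * sW) * sW := by rw [hVeq]; noncomm_ring
    rw [hK, hRV]
    have hswap : ∀ a b : Hsp →L[ℂ] Hsp,
        ((-1 : ℂ) ∈ spectrum ℂ (a * b) ↔ (-1 : ℂ) ∈ spectrum ℂ (b * a)) := fun a b => by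
      simpa using spectrum.unit_mem_mul_comm (r := (-1 : ℂˣ)) (a := a) (b := b)
    exact (hswap _ _).symm
  rw [lhs_iff, rhs_iff, spectrum.mem_iff]
  have : algebraMap ℂ (Hsp →L[ℂ] Hsp) (-1) - R * Vop = -(1 + R * Vop) := by
    rw [Algebra.algebraMap_eq_smul_one, neg_smul, one_smul, neg_add]
    abel
  rw [this, IsUnit.neg_iff]
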